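/- Let S be a compact, Hausdorff, totally disconnected topological space and let F be a sheaf of abelian groups on S. If the group of global sections F(S) is zero, then F is the zero sheaf, i.e., F(U) = 0 for every open subset U of S. -/

import Mathlib

open TopologicalSpace Opposite CategoryTheory CategoryTheory.Limits

universe u

/-- Any two sections over an open set equal to `⊥` are equal, since `F(⊥)` is terminal. -/
lemma sections_bot_eq {S : Type} [TopologicalSpace S]
    (F : TopCat.Sheaf AddCommGrpCat.{u} (TopCat.of S)) {U : Opens (TopCat.of S)} (hU : U = ⊥)
    (a b : F.val.obj (op U)) : a = b := by
  have T := F.isTerminalOfEqEmpty hU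
  have hid : 𝟙 (F.val.obj (op U)) = 0 := T.hom_ext _ _
  calc a = (𝟙 (F.val.obj (op U))) a := rfl
    _ = (0 : F.val.obj (op U) ⟶ F.val.obj (op U)) b := by rw [hid]; simp
    _ = (𝟙 (F.val.obj (op U))) b := by rw [hid]
    _ = b := rfl

/-- If global sections vanish, sections over any open set equal to `⊤` vanish. -/
lemma sections_top_eq_zero {S : Type} [TopologicalSpace S]
    (F : TopCat.Sheaf AddCommGrpCat.{u} (TopCat.of S))
    (h : ∀ s : F.val.obj (op (⊤ : Opens (TopCat.of S))), s = 0)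
    {V : Opens (TopCat.of S)} (hV : V = ⊤) (y : F.val.obj (op V)) : y = 0 := by
  subst hV
  exact h y

/-- The underlying type-valued presheaf of `F` satisfies unique gluing. -/
lemma forget_isSheafUniqueGluing {S : Type} [TopologicalSpace S]
    (F : TopCat.Sheaf AddCommGrpCat.{u} (TopCat.of S)) :
    TopCat.Presheaf.IsSheafUniqueGluing (F.val ⋙ forget AddCommGrpCat.{u}) := by
  apply (TopCat.Presheaf.isSheaf_iff_isSheafUniqueGluing_types _).mp
  exact (TopCat.Presheaf.isSheaf_iff_isSheaf_comp' (forget AddCommGrpCat.{u}) F.val).mp F.cond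

/-- A section restricted to a clopen subset vanishes if global sections vanish. -/
lemma restrict_clopen_eq_zero {S : Type} [TopologicalSpace S]
    (F : TopCat.Sheaf AddCommGrpCat.{u} (TopCat.of S))
    (h : ∀ s : F.val.obj (op (⊤ : Opens (TopCat.of S))), s = 0)
    (U : Opens (TopCat.of S)) (x : F.val.obj (op U))
    (V : Set S) (hV : IsClopen V) (hVU : V ⊆ (U : Set (TopCat.of S))) :
    F.val.map (homOfLE (show (⟨V, hV.2⟩ : Opens (TopCat.of S)) ≤ U from hVU)).op x = 0 := by
  set G := F.val ⋙ forget AddCommGrpCat.{u} with hG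
  set Vo : Opens (TopCat.of S) := ⟨V, hV.2⟩ with hVo
  set Vc : Opens (TopCat.of S) := ⟨Vᶜ, hV.1.isOpen_compl⟩ with hVc
  let W : Bool → Opens (TopCat.of S) := fun b => if b then Vo else Vc
  let sf : ∀ b : Bool, G.obj (op (W b)) :=
    Bool.rec ((0 : F.val.obj (op (W false))) : G.obj (op (W false)))
      ((F.val.map (homOfLE (show Vo ≤ U from hVU)).op x : F.val.obj (op (W true)))
        : G.obj (op (W true)))
  have hbot1 : W true ⊓ W false = ⊥ := by
    apply le_bot_iff.mp
    intro p hp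
    exact absurd hp.1 hp.2
  have hbot2 : W false ⊓ W true = ⊥ := by
    apply le_bot_iff.mp
    intro p hp
    exact absurd hp.2 hp.1
  have compat : TopCat.Presheaf.IsCompatible G W sf := by
    intro i j
    cases i <;> cases j
    · congr 1
    · exact sections_bot_eq F hbot2 _ _
    · exact sections_bot_eq F hbot1 _ _
    · congr 1
  have hsup : iSup W = ⊤ := by
    apply le_antisymm le_top
    intro p _
    by_cases hp : p ∈ V
    · exact Opens.mem_iSup.mpr ⟨true, hp⟩
    · exact Opens.mem_iSup.mpr ⟨false, hp⟩
  obtain ⟨s, hs, -⟩ := forget_isSheafUniqueGluing F W sf compat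
  have hs0 : s = (0 : F.val.obj (op (iSup W))) := sections_top_eq_zero F h hsup s
  have hs' := hs true
  rw [hs0] at hs'
  have : F.val.map (Opens.leSupr W true).op (0 : F.val.obj (op (iSup W))) = sf true := hs'
  rw [map_zero] at this
  exact this.symm

/-- A sheaf of abelian groups on a profinite (compact Hausdorff totally disconnected) space
with vanishing global sections is the zero sheaf. -/
theorem stmt_3 {S : Type} [TopologicalSpace S] [CompactSpace S] [T2Space S]
    [TotallyDisconnectedSpace S]
    (F : TopCat.Sheaf AddCommGrpCat (TopCat.of S))
    (h : ∀ s : F.val.obj (op (⊤ : Opens (TopCat.of S))), s = 0) :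
    ∀ (U : Opens (TopCat.of S)) (x : F.val.obj (op U)), x = 0 := by
  intro U x
  haveI h1 : T2Space ↑(TopCat.of S) := ‹T2Space S›
  haveI h2 : CompactSpace ↑(TopCat.of S) := ‹CompactSpace S›
  haveI h3 : TotallyDisconnectedSpace ↑(TopCat.of S) := ‹TotallyDisconnectedSpace S›
  -- choose a clopen neighborhood inside U for each point of U
  have key : ∀ u : U, ∃ V : Set S,
      IsClopen V ∧ (u : TopCat.of S) ∈ V ∧ V ⊆ (U : Set (TopCat.of S)) := by
    intro u
    exact compact_exists_isClopen_in_isOpen (X := TopCat.of S) U.isOpen u.2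
  choose V hVclopen hVmem hVsub using key
  set G := F.val ⋙ forget AddCommGrpCat with hG
  let Vfam : U → Opens (TopCat.of S) := fun u => ⟨V u, (hVclopen u).2⟩
  have e : U = iSup Vfam := by
    apply le_antisymm
    · intro p hp
      exact Opens.mem_iSup.mpr ⟨⟨p, hp⟩, hVmem ⟨p, hp⟩⟩
    · exact iSup_le fun u => hVsub u
  let sf : ∀ u : U, G.obj (op (Vfam u)) := fun u =>
    (F.val.map (homOfLE (show Vfam u ≤ U from hVsub u)).op x : F.val.obj (op (Vfam u)))
  have hsf : ∀ u, sf u = (0 : F.val.obj (op (Vfam u))) := fun u =>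
    restrict_clopen_eq_zero F h U x (V u) (hVclopen u) (hVsub u)
  have compat : TopCat.Presheaf.IsCompatible G Vfam sf := by
    intro i j
    show F.val.map _ (sf i) = F.val.map _ (sf j)
    rw [hsf i, hsf j, map_zero, map_zero]
  obtain ⟨s, -, huniq⟩ := forget_isSheafUniqueGluing F Vfam sf compat
  -- both the restriction of x and 0 are gluings
  have glx : TopCat.Presheaf.IsGluing G Vfam sf
      (F.val.map (eqToHom e.symm).op x : F.val.obj (op (iSup Vfam))) := by
    intro u
    show F.val.map (Opens.leSupr Vfam u).op (F.val.map (eqToHom e.symm).op x) = sf u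
    rw [← CategoryTheory.comp_apply, ← F.val.map_comp]
    congr 1
  have gl0 : TopCat.Presheaf.IsGluing G Vfam sf (0 : F.val.obj (op (iSup Vfam))) := by
    intro u
    show F.val.map (Opens.leSupr Vfam u).op (0 : F.val.obj (op (iSup Vfam))) = sf u
    rw [map_zero, hsf u]
  have heq : F.val.map (eqToHom e.symm).op x = (0 : F.val.obj (op (iSup Vfam))) :=
    (huniq _ glx).trans (huniq _ gl0).symm
  have : x = F.val.map (eqToHom e).op (F.val.map (eqToHom e.symm).op x) := by
    rw [← CategoryTheory.comp_apply, ← F.val.map_comp, ← op_comp, eqToHom_trans, eqToHom_refl,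
      op_id, F.val.map_id]
    rfl
  rw [this, heq, map_zero]
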